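/- Let y ∈ ℝ₊^{2m+1} have strictly positive components, let x⁰ ∈ ℝ^{m+1} be strictly positive, and define the iterates x^{t+1} = T(x^t) for t ≥ 0. If x^∞ and x' are two limit points of the sequence (x^t) (limits along subsequences) such that (x^∞*x^∞)_i > 0 and (x'*x')_i > 0 for all i = 0,…,2m, then I(y‖x^∞*x^∞) = I(y‖x'*x'); i.e., the objective value is constant over the set of limit points. -/

import Mathlib

open Finset Filter

/-- Extension of `x : Fin (m+1) → ℝ` to `ℕ`, zero outside `[0, m]`. -/
def ext (m : ℕ) (x : Fin (m + 1) → ℝ) (k : ℕ) : ℝ :=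
  if h : k < m + 1 then x ⟨k, h⟩ else 0

/-- Autoconvolution `(x*x)_i = ∑_{j=0}^{i} x_{i-j} x_j`. -/
def aconv (m : ℕ) (x : Fin (m + 1) → ℝ) : Fin (2 * m + 1) → ℝ :=
  fun i => ∑ j ∈ Finset.range (i.1 + 1), ext m x (i.1 - j) * ext m x j

/-- The index `ℓ + j ∈ {0,…,2m}` for `ℓ, j ∈ {0,…,m}`. -/
def idx (m : ℕ) (ℓ j : Fin (m + 1)) : Fin (2 * m + 1) :=
  ⟨ℓ.1 + j.1, by have h1 := ℓ.isLt; have h2 := j.isLt; omega⟩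

/-- One term of the I-divergence, with values in `[0,∞]`, with the conventions
`0·log(0/b) = 0` and value `∞` if `a > 0 = b`. -/
noncomputable def termDiv (a b : ℝ) : ENNReal :=
  if a = 0 then ENNReal.ofReal b
  else if b = 0 then ⊤
  else ENNReal.ofReal (a * Real.log (a / b) - a + b)

/-- `[0,∞]`-valued I-divergence between vectors. -/
noncomputable def Idiv {n : ℕ} (u v : Fin n → ℝ) : ENNReal :=
  ∑ i, termDiv (u i) (v i)

/-- Real-valued I-divergence between vectors (used when the second argument is
positive wherever the first one is). -/
noncomputable def IdivR {n : ℕ} (u v : Fin n → ℝ) : ℝ :=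
  ∑ i, (u i * Real.log (u i / v i) - u i + v i)

/-- `[0,∞]`-valued I-divergence between `(2m+1) × (m+1)` matrices. -/
noncomputable def IdivM (m : ℕ) (M N : Fin (2 * m + 1) → Fin (m + 1) → ℝ) : ENNReal :=
  ∑ i, ∑ j, termDiv (M i j) (N i j)

/-- Real-valued I-divergence between `(2m+1) × (m+1)` matrices. -/
noncomputable def IdivMR (m : ℕ) (M N : Fin (2 * m + 1) → Fin (m + 1) → ℝ) : ℝ :=
  ∑ i, ∑ j, (M i j * Real.log (M i j / N i j) - M i j + N i j)

/-- The set 𝒴: nonnegative matrices supported on `{(i,j) : j ≤ i ≤ j+m}` with row sums `y`. -/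
def calY (m : ℕ) (y : Fin (2 * m + 1) → ℝ) (Y : Fin (2 * m + 1) → Fin (m + 1) → ℝ) : Prop :=
  (∀ i j, 0 ≤ Y i j) ∧
  (∀ (i : Fin (2 * m + 1)) (j : Fin (m + 1)), ¬(j.1 ≤ i.1 ∧ i.1 ≤ j.1 + m) → Y i j = 0) ∧
  (∀ i, ∑ j, Y i j = y i)

/-- The matrix `W(x)` with `W(x)_{ij} = x_{i-j} x_j` on the support and `0` elsewhere. -/
def Wmat (m : ℕ) (x : Fin (m + 1) → ℝ) (i : Fin (2 * m + 1)) (j : Fin (m + 1)) : ℝ :=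
  if h : j.1 ≤ i.1 ∧ i.1 ≤ j.1 + m then x ⟨i.1 - j.1, by omega⟩ * x j else 0

/-- The matrix `Y*(x)` with `Y*(x)_{ij} = (x_{i-j} x_j/(x*x)_i)·y_i` on the support. -/
noncomputable def Ystar (m : ℕ) (y : Fin (2 * m + 1) → ℝ) (x : Fin (m + 1) → ℝ)
    (i : Fin (2 * m + 1)) (j : Fin (m + 1)) : ℝ :=
  if h : j.1 ≤ i.1 ∧ i.1 ≤ j.1 + m then
    x ⟨i.1 - j.1, by omega⟩ * x j / aconv m x i * y i
  else 0

/-- `Ŷ_j = ∑_{i=0}^{m} Y_{i+j,i} + ∑_{i=j}^{j+m} Y_{ij}`. -/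
def Yhat (m : ℕ) (Y : Fin (2 * m + 1) → Fin (m + 1) → ℝ) (j : Fin (m + 1)) : ℝ :=
  (∑ ℓ : Fin (m + 1), Y (idx m ℓ j) ℓ) + ∑ ℓ : Fin (m + 1), Y (idx m ℓ j) j

/-- The algorithm map `T(x)_j = x_j (1/c) ∑_ℓ x_ℓ y_{ℓ+j}/(x*x)_{ℓ+j}`,
with `c = √(∑ y_i)`. -/
noncomputable def Tmap (m : ℕ) (y : Fin (2 * m + 1) → ℝ) (x : Fin (m + 1) → ℝ)
    (j : Fin (m + 1)) : ℝ :=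
  x j * (1 / Real.sqrt (∑ i, y i)) * ∑ ℓ, x ℓ * y (idx m ℓ j) / aconv m x (idx m ℓ j)

/-- The gradient `∇_j I(x) = 2 ∑_ℓ ( x_ℓ − x_ℓ y_{ℓ+j}/(x*x)_{ℓ+j} )`. -/
noncomputable def gradI (m : ℕ) (y : Fin (2 * m + 1) → ℝ) (x : Fin (m + 1) → ℝ)
    (j : Fin (m + 1)) : ℝ :=
  2 * ∑ ℓ, (x ℓ - x ℓ * y (idx m ℓ j) / aconv m x (idx m ℓ j))


lemma ext_nonneg (m : ℕ) (x : Fin (m + 1) → ℝ) (hx : ∀ j, 0 ≤ x j) (k : ℕ) :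
    0 ≤ ext m x k := by
  unfold _root_.ext; split <;> simp [hx]

lemma ext_eq (m : ℕ) (x : Fin (m + 1) → ℝ) (k : ℕ) (h : k < m + 1) :
    ext m x k = x ⟨k, h⟩ := by simp [_root_.ext, h]

lemma ext_zero (m : ℕ) (x : Fin (m + 1) → ℝ) (k : ℕ) (h : ¬ k < m + 1) :
    ext m x k = 0 := by simp [_root_.ext, h]

lemma aconv_pos (m : ℕ) (x : Fin (m + 1) → ℝ) (hx : ∀ j, 0 < x j)
    (i : Fin (2 * m + 1)) : 0 < aconv m x i := by
  have hnn : ∀ j, 0 ≤ x j := fun j => (hx j).le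
  unfold aconv
  apply Finset.sum_pos'
  · intro j _; exact mul_nonneg (ext_nonneg m x hnn _) (ext_nonneg m x hnn _)
  · by_cases h : i.1 ≤ m
    · refine ⟨0, by simp, ?_⟩
      rw [Nat.sub_zero, ext_eq m x i.1 (by omega), ext_eq m x 0 (by omega)]
      exact mul_pos (hx _) (hx _)
    · have h2 : i.1 - m ≤ i.1 := Nat.sub_le _ _
      refine ⟨i.1 - m, Finset.mem_range.mpr (by omega), ?_⟩
      have hi := i.isLt
      have h3 : i.1 - (i.1 - m) = m := by omega
      rw [h3, ext_eq m x m (by omega), ext_eq m x (i.1 - m) (by omega)]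
      exact mul_pos (hx _) (hx _)

/-- Row sums of `Wmat` are the autoconvolution. -/
lemma sum_Wmat (m : ℕ) (x : Fin (m + 1) → ℝ) (i : Fin (2 * m + 1)) :
    ∑ j, Wmat m x i j = aconv m x i := by
  set W' : ℕ → ℝ := fun k => if k ≤ i.1 ∧ i.1 ≤ k + m then _root_.ext m x (i.1 - k) * _root_.ext m x k else 0
    with hW'
  have hiLt := i.isLt
  have h1 : ∑ j, Wmat m x i j = ∑ k ∈ Finset.range (m + 1), W' k := by
    rw [← Fin.sum_univ_eq_sum_range]
    apply Finset.sum_congr rfl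
    intro j _
    by_cases h : j.1 ≤ i.1 ∧ i.1 ≤ j.1 + m
    · have hj : j.1 < m + 1 := j.isLt
      simp only [Wmat, W', dif_pos h, if_pos h, ext_eq m x (i.1 - j.1) (by omega),
        ext_eq m x j.1 hj]
    · simp only [Wmat, W', dif_neg h, if_neg h]
  have h2 : ∑ k ∈ Finset.range (m + 1), W' k = ∑ k ∈ Finset.range (2 * m + 1), W' k := by
    apply Finset.sum_subset
    · exact Finset.range_subset_range.mpr (by omega)
    · intro k _ hk
      have : ¬ k < m + 1 := fun hc => hk (Finset.mem_range.mpr hc)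
      simp [W', ext_zero m x k this]
  have h3 : aconv m x i = ∑ k ∈ Finset.range (2 * m + 1), W' k := by
    unfold aconv
    rw [show (∑ k ∈ Finset.range (2 * m + 1), W' k) = ∑ k ∈ Finset.range (i.1 + 1), W' k by
      symm; apply Finset.sum_subset (Finset.range_subset_range.mpr (by omega))
      intro k _ hk
      have : ¬ k ≤ i.1 := by
        intro hc; exact hk (Finset.mem_range.mpr (by omega))
      simp [W', this]]
    apply Finset.sum_congr rfl
    intro k hk
    have hk' : k ≤ i.1 := by have := Finset.mem_range.mp hk; omega
    by_cases h : i.1 ≤ k + m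
    · simp [W', hk', h]
    · have : ¬ i.1 - k < m + 1 := by omega
      simp [W', hk', h, ext_zero m x (i.1 - k) this]
  rw [h1, h2, ← h3]

/-- Sum over rows `i` of a column function supported on `{j ≤ i ≤ j+m}` equals the
sum over `ℓ` at `i = ℓ + j`. -/
lemma sum_idx_eq (m : ℕ) (j : Fin (m + 1)) (F : Fin (2 * m + 1) → ℝ)
    (hF : ∀ i : Fin (2 * m + 1), ¬(j.1 ≤ i.1 ∧ i.1 ≤ j.1 + m) → F i = 0) :
    ∑ i, F i = ∑ ℓ : Fin (m + 1), F (idx m ℓ j) := by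
  have hinj : ∀ a ∈ (Finset.univ : Finset (Fin (m+1))), ∀ b ∈ Finset.univ,
      idx m a j = idx m b j → a = b := by
    intro a _ b _ h
    have := congrArg Fin.val h
    simp only [idx] at this
    exact Fin.ext (by omega)
  rw [← Finset.sum_image hinj]
  symm
  apply Finset.sum_subset (Finset.subset_univ _)
  intro i _ hi
  apply hF
  intro hc
  apply hi
  rw [Finset.mem_image]
  exact ⟨⟨i.1 - j.1, by omega⟩, Finset.mem_univ _, by
    simp only [idx]; exact Fin.ext (by simp; omega)⟩

lemma idx_comm (m : ℕ) (ℓ j : Fin (m + 1)) : idx m ℓ j = idx m j ℓ :=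
  Fin.ext (by simp [idx, Nat.add_comm])

lemma idx_supp (m : ℕ) (ℓ j : Fin (m + 1)) :
    j.1 ≤ (idx m ℓ j).1 ∧ (idx m ℓ j).1 ≤ j.1 + m := by
  have := ℓ.isLt; simp only [idx]; omega

lemma Ystar_idx (m : ℕ) (y : Fin (2 * m + 1) → ℝ) (x : Fin (m + 1) → ℝ)
    (ℓ j : Fin (m + 1)) :
    Ystar m y x (idx m ℓ j) j = x ℓ * x j / aconv m x (idx m ℓ j) * y (idx m ℓ j) := by
  have h := idx_supp m ℓ j
  simp only [Ystar, dif_pos h]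
  have e : (⟨(idx m ℓ j).1 - j.1, by omega⟩ : Fin (m + 1)) = ℓ := by
    apply Fin.ext; simp [idx]
  rw [e]

lemma Wmat_idx (m : ℕ) (v : Fin (m + 1) → ℝ) (ℓ j : Fin (m + 1)) :
    Wmat m v (idx m ℓ j) j = v ℓ * v j := by
  have h := idx_supp m ℓ j
  simp only [Wmat, dif_pos h]
  have e : (⟨(idx m ℓ j).1 - j.1, by omega⟩ : Fin (m + 1)) = ℓ := by
    apply Fin.ext; simp [idx]
  rw [e]

lemma Ystar_off (m : ℕ) (y : Fin (2 * m + 1) → ℝ) (x : Fin (m + 1) → ℝ)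
    (i : Fin (2 * m + 1)) (j : Fin (m + 1)) (h : ¬(j.1 ≤ i.1 ∧ i.1 ≤ j.1 + m)) :
    Ystar m y x i j = 0 := by simp only [Ystar, dif_neg h]

lemma Wmat_off (m : ℕ) (v : Fin (m + 1) → ℝ) (i : Fin (2 * m + 1)) (j : Fin (m + 1))
    (h : ¬(j.1 ≤ i.1 ∧ i.1 ≤ j.1 + m)) : Wmat m v i j = 0 := by
  simp only [Wmat, dif_neg h]

lemma Ystar_nonneg (m : ℕ) (y : Fin (2 * m + 1) → ℝ) (hy : ∀ i, 0 < y i)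
    (x : Fin (m + 1) → ℝ) (hx : ∀ j, 0 < x j) (i : Fin (2 * m + 1)) (j : Fin (m + 1)) :
    0 ≤ Ystar m y x i j := by
  unfold Ystar; split
  · exact (mul_pos (div_pos (mul_pos (hx _) (hx _)) (aconv_pos m x hx i)) (hy i)).le
  · exact le_rfl

lemma Wmat_nonneg (m : ℕ) (v : Fin (m + 1) → ℝ) (hv : ∀ j, 0 ≤ v j)
    (i : Fin (2 * m + 1)) (j : Fin (m + 1)) : 0 ≤ Wmat m v i j := by
  unfold Wmat; split
  · exact mul_nonneg (hv _) (hv _)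
  · exact le_rfl

lemma Wmat_zero_imp (m : ℕ) (v : Fin (m + 1) → ℝ) (hv : ∀ j, 0 < v j)
    (i : Fin (2 * m + 1)) (j : Fin (m + 1)) (h : Wmat m v i j = 0) :
    ¬(j.1 ≤ i.1 ∧ i.1 ≤ j.1 + m) := by
  intro hc
  rw [Wmat, dif_pos hc] at h
  exact (mul_pos (hv _) (hv _)).ne' h

lemma Ystar_eq_Wmat_ratio (m : ℕ) (y : Fin (2 * m + 1) → ℝ) (x : Fin (m + 1) → ℝ)
    (i : Fin (2 * m + 1)) (j : Fin (m + 1)) :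
    Ystar m y x i j = Wmat m x i j / aconv m x i * y i := by
  unfold Ystar Wmat; split
  · rfl
  · simp

lemma sum_Ystar_row (m : ℕ) (y : Fin (2 * m + 1) → ℝ) (x : Fin (m + 1) → ℝ)
    (hx : ∀ j, 0 < x j) (i : Fin (2 * m + 1)) :
    ∑ j, Ystar m y x i j = y i := by
  have h : ∀ j : Fin (m + 1), Ystar m y x i j = Wmat m x i j / aconv m x i * y i :=
    fun j => Ystar_eq_Wmat_ratio m y x i j
  rw [Finset.sum_congr rfl (fun j _ => h j), ← Finset.sum_mul, ← Finset.sum_div,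
    sum_Wmat, div_self (aconv_pos m x hx i).ne', one_mul]

/-- per-term tangent bound for the log-sum inequality -/
lemma term_lb (a b aj bj : ℝ) (ha : 0 < a) (hb : 0 < b) (haj : 0 ≤ aj) (hbj : 0 ≤ bj)
    (h0 : bj = 0 → aj = 0) :
    aj * Real.log (a / b) + aj - a / b * bj ≤ aj * Real.log (aj / bj) := by
  rcases eq_or_lt_of_le haj with h | haj'
  · rw [← h]
    have : 0 ≤ a / b * bj := by positivity
    simp only [zero_mul, add_zero, zero_add]
    linarith
  · have hbj' : 0 < bj := by
      rcases eq_or_lt_of_le hbj with h' | h'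
      · exact absurd (h0 h'.symm) (by linarith)
      · exact h'
    have hpos : 0 < a / b * (bj / aj) := by positivity
    have hlog := Real.log_le_sub_one_of_pos hpos
    rw [Real.log_mul (by positivity) (by positivity),
      Real.log_div ha.ne' hb.ne', Real.log_div hbj'.ne' haj'.ne'] at hlog
    have h4 := mul_le_mul_of_nonneg_left hlog haj'.le
    have key : aj * (a / b * (bj / aj) - 1) = a / b * bj - aj := by field_simp
    rw [Real.log_div haj'.ne' hbj'.ne', Real.log_div ha.ne' hb.ne']
    nlinarith [h4, key]

/-- log-sum inequality over a row -/
lemma logsum_row {n : ℕ} (a b : ℝ) (ha : 0 < a) (hb : 0 < b) (f g : Fin n → ℝ)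
    (hf : ∀ j, 0 ≤ f j) (hg : ∀ j, 0 ≤ g j) (h0 : ∀ j, g j = 0 → f j = 0)
    (hsf : ∑ j, f j = a) (hsg : ∑ j, g j = b) :
    a * Real.log (a / b) ≤ ∑ j, f j * Real.log (f j / g j) := by
  have h1 : ∑ j, (f j * Real.log (a / b) + f j - a / b * g j) = a * Real.log (a / b) := by
    rw [Finset.sum_sub_distrib, Finset.sum_add_distrib, ← Finset.sum_mul,
      ← Finset.mul_sum, hsf, hsg]
    field_simp
    ring
  calc a * Real.log (a / b) = ∑ j, (f j * Real.log (a / b) + f j - a / b * g j) := h1.symm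
    _ ≤ ∑ j, f j * Real.log (f j / g j) :=
      Finset.sum_le_sum fun j _ => term_lb a b (f j) (g j) ha hb (hf j) (hg j) (h0 j)

lemma Tmap_pos (m : ℕ) (y : Fin (2 * m + 1) → ℝ) (hy : ∀ i, 0 < y i)
    (x : Fin (m + 1) → ℝ) (hx : ∀ j, 0 < x j) (j : Fin (m + 1)) :
    0 < Tmap m y x j := by
  unfold Tmap
  have hsy : 0 < ∑ i, y i := Finset.sum_pos (fun i _ => hy i) Finset.univ_nonempty
  have hc : 0 < Real.sqrt (∑ i, y i) := Real.sqrt_pos.mpr hsy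
  have hsum : 0 < ∑ ℓ, x ℓ * y (idx m ℓ j) / aconv m x (idx m ℓ j) := by
    apply Finset.sum_pos _ Finset.univ_nonempty
    intro ℓ _
    exact div_pos (mul_pos (hx ℓ) (hy _)) (aconv_pos m x hx _)
  exact mul_pos (mul_pos (hx j) (one_div_pos.mpr hc)) hsum

lemma descent (m : ℕ) (y : Fin (2 * m + 1) → ℝ) (hy : ∀ i, 0 < y i)
    (x : Fin (m + 1) → ℝ) (hx : ∀ j, 0 < x j) :
    IdivR y (aconv m (Tmap m y x)) ≤ IdivR y (aconv m x) := by
  set u := Tmap m y x with hudef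
  set c := Real.sqrt (∑ i, y i) with hcdef
  have hsy : 0 < ∑ i, y i := Finset.sum_pos (fun i _ => hy i) Finset.univ_nonempty
  have hc : 0 < c := Real.sqrt_pos.mpr hsy
  have hc2 : c * c = ∑ i, y i := Real.mul_self_sqrt hsy.le
  have hu : ∀ j, 0 < u j := fun j => Tmap_pos m y hy x hx j
  set G : (Fin (m + 1) → ℝ) → ℝ := fun v =>
    (∑ i, ∑ j, Ystar m y x i j * Real.log (Ystar m y x i j / Wmat m v i j))
      - (∑ i, y i) + ∑ i, ∑ j, Wmat m v i j with hG
  -- Step A: the surrogate dominates the objective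
  have stepA : ∀ v : Fin (m + 1) → ℝ, (∀ j, 0 < v j) → IdivR y (aconv m v) ≤ G v := by
    intro v hv
    have hB := aconv_pos m v hv
    have hrw : G v = ∑ i, ((∑ j, Ystar m y x i j * Real.log (Ystar m y x i j / Wmat m v i j))
        - y i + ∑ j, Wmat m v i j) := by
      simp only [hG]
      rw [Finset.sum_add_distrib, Finset.sum_sub_distrib]
    rw [hrw]
    simp only [IdivR]
    apply Finset.sum_le_sum
    intro i _
    rw [sum_Wmat m v i]
    have hls : y i * Real.log (y i / aconv m v i)
        ≤ ∑ j, Ystar m y x i j * Real.log (Ystar m y x i j / Wmat m v i j) :=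
      logsum_row (y i) (aconv m v i) (hy i) (hB i)
        (fun j => Ystar m y x i j) (fun j => Wmat m v i j)
        (fun j => Ystar_nonneg m y hy x hx i j)
        (fun j => Wmat_nonneg m v (fun j => (hv j).le) i j)
        (fun j hj => Ystar_off m y x i j (Wmat_zero_imp m v hv i j hj))
        (sum_Ystar_row m y x hx i) (sum_Wmat m v i)
    linarith
  -- Step B: equality at the current point
  have stepB : IdivR y (aconv m x) = G x := by
    have hB := aconv_pos m x hx
    have hrw : G x = ∑ i, ((∑ j, Ystar m y x i j * Real.log (Ystar m y x i j / Wmat m x i j))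
        - y i + ∑ j, Wmat m x i j) := by
      simp only [hG]
      rw [Finset.sum_add_distrib, Finset.sum_sub_distrib]
    rw [hrw]
    simp only [IdivR]
    apply Finset.sum_congr rfl
    intro i _
    rw [sum_Wmat m x i]
    have hrow : ∑ j, Ystar m y x i j * Real.log (Ystar m y x i j / Wmat m x i j)
        = y i * Real.log (y i / aconv m x i) := by
      have hterm : ∀ j : Fin (m + 1), Ystar m y x i j * Real.log (Ystar m y x i j / Wmat m x i j)
          = Ystar m y x i j * Real.log (y i / aconv m x i) := by
        intro j
        by_cases h : j.1 ≤ i.1 ∧ i.1 ≤ j.1 + m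
        · have hw : 0 < Wmat m x i j := by
            rw [Wmat, dif_pos h]; exact mul_pos (hx _) (hx _)
          have hratio : Ystar m y x i j / Wmat m x i j = y i / aconv m x i := by
            rw [Ystar_eq_Wmat_ratio m y x i j]
            field_simp
          rw [hratio]
        · rw [Ystar_off m y x i j h]; simp
      rw [Finset.sum_congr rfl (fun j _ => hterm j), ← Finset.sum_mul,
        sum_Ystar_row m y x hx i]
    rw [hrow]
  -- symmetry of the split masses
  have hDsymm : ∀ ℓ j : Fin (m + 1),
      Ystar m y x (idx m ℓ j) j = Ystar m y x (idx m j ℓ) ℓ := by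
    intro ℓ j
    rw [Ystar_idx, Ystar_idx, idx_comm m j ℓ]
    ring
  -- column sums equal c * u j
  have hR : ∀ j : Fin (m + 1), ∑ ℓ, Ystar m y x (idx m ℓ j) j = c * u j := by
    intro j
    have hcu : c * u j = x j * ∑ ℓ, x ℓ * y (idx m ℓ j) / aconv m x (idx m ℓ j) := by
      rw [hudef]
      simp only [Tmap]
      rw [← hcdef]
      field_simp
    rw [hcu, Finset.mul_sum]
    apply Finset.sum_congr rfl
    intro ℓ _
    rw [Ystar_idx]
    ring
  have hsumY : ∑ j, (c * u j) = ∑ i, y i := by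
    have h1 : ∀ j : Fin (m + 1), ∑ i, Ystar m y x i j = c * u j := by
      intro j
      rw [sum_idx_eq m j _ (fun i hi => Ystar_off m y x i j hi), hR j]
    calc ∑ j, (c * u j) = ∑ j, ∑ i, Ystar m y x i j :=
          Finset.sum_congr rfl (fun j _ => (h1 j).symm)
      _ = ∑ i, ∑ j, Ystar m y x i j := Finset.sum_comm
      _ = ∑ i, y i := Finset.sum_congr rfl (fun i _ => sum_Ystar_row m y x hx i)
  have hsumu : ∑ j, u j = c := by
    rw [← Finset.mul_sum] at hsumY
    exact mul_left_cancel₀ hc.ne' (hsumY.trans hc2.symm)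
  -- decomposition of the surrogate
  have decomp : ∀ v : Fin (m + 1) → ℝ, (∀ j, 0 < v j) →
      G v = (∑ i, ∑ j, Ystar m y x i j * Real.log (Ystar m y x i j))
        - 2 * (∑ j, (c * u j) * Real.log (v j)) - (∑ i, y i) + (∑ j, v j) ^ 2 := by
    intro v hv
    have hC1 : ∑ i, ∑ j, Ystar m y x i j * Real.log (Ystar m y x i j / Wmat m v i j)
        = (∑ i, ∑ j, Ystar m y x i j * Real.log (Ystar m y x i j))
          - ∑ i, ∑ j, Ystar m y x i j * Real.log (Wmat m v i j) := by
      rw [← Finset.sum_sub_distrib]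
      apply Finset.sum_congr rfl; intro i _
      rw [← Finset.sum_sub_distrib]
      apply Finset.sum_congr rfl; intro j _
      by_cases hz : Ystar m y x i j = 0
      · simp [hz]
      · have hsupp : j.1 ≤ i.1 ∧ i.1 ≤ j.1 + m := by
          by_contra h; exact hz (Ystar_off m y x i j h)
        have hw : 0 < Wmat m v i j := by
          rw [Wmat, dif_pos hsupp]; exact mul_pos (hv _) (hv _)
        rw [Real.log_div hz hw.ne']
        ring
    have hC2 : ∑ i, ∑ j, Ystar m y x i j * Real.log (Wmat m v i j)
        = 2 * ∑ j, (c * u j) * Real.log (v j) := by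
      rw [Finset.sum_comm]
      have hcol : ∀ j : Fin (m + 1), ∑ i, Ystar m y x i j * Real.log (Wmat m v i j)
          = ∑ ℓ, Ystar m y x (idx m ℓ j) j * (Real.log (v ℓ) + Real.log (v j)) := by
        intro j
        rw [sum_idx_eq m j _ (fun i hi => by rw [Ystar_off m y x i j hi, zero_mul])]
        apply Finset.sum_congr rfl; intro ℓ _
        rw [Wmat_idx, Real.log_mul (hv ℓ).ne' (hv j).ne']
      rw [Finset.sum_congr rfl (fun j _ => hcol j)]
      have hsplit : ∑ j, ∑ ℓ, Ystar m y x (idx m ℓ j) j * (Real.log (v ℓ) + Real.log (v j))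
          = (∑ j, ∑ ℓ, Ystar m y x (idx m ℓ j) j * Real.log (v ℓ))
            + ∑ j, ∑ ℓ, Ystar m y x (idx m ℓ j) j * Real.log (v j) := by
        simp only [mul_add, Finset.sum_add_distrib]
      rw [hsplit]
      have hswap : (∑ j, ∑ ℓ, Ystar m y x (idx m ℓ j) j * Real.log (v ℓ))
          = ∑ j, ∑ ℓ, Ystar m y x (idx m ℓ j) j * Real.log (v j) := by
        rw [Finset.sum_comm]
        apply Finset.sum_congr rfl; intro a _
        apply Finset.sum_congr rfl; intro b _
        rw [hDsymm a b]
      rw [hswap, ← two_mul]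
      congr 1
      apply Finset.sum_congr rfl; intro j _
      rw [← Finset.sum_mul, hR j]
    have hC3 : ∑ i, ∑ j, Wmat m v i j = (∑ j, v j) ^ 2 := by
      rw [Finset.sum_comm]
      have hcol : ∀ j : Fin (m + 1), ∑ i, Wmat m v i j = (∑ ℓ, v ℓ) * v j := by
        intro j
        rw [sum_idx_eq m j _ (fun i hi => Wmat_off m v i j hi)]
        rw [Finset.sum_congr rfl (fun ℓ _ => Wmat_idx m v ℓ j), ← Finset.sum_mul]
      rw [Finset.sum_congr rfl (fun j _ => hcol j), ← Finset.mul_sum, sq]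
    simp only [hG]
    rw [hC1, hC2, hC3]
  -- Step C: the M-step decreases the surrogate
  have stepC : G u ≤ G x := by
    have hper : ∀ j : Fin (m + 1),
        (c * u j) * Real.log (x j) - (c * u j) * Real.log (u j) ≤ c * x j - c * u j := by
      intro j
      have hlog := Real.log_le_sub_one_of_pos (div_pos (hx j) (hu j))
      rw [Real.log_div (hx j).ne' (hu j).ne'] at hlog
      have h4 := mul_le_mul_of_nonneg_left hlog (mul_pos hc (hu j)).le
      have hune : u j ≠ 0 := (hu j).ne'
      have he : (c * u j) * (x j / u j - 1) = c * x j - c * u j := by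
        field_simp
      nlinarith [h4, he]
    have hsum2 := Finset.sum_le_sum (fun j (_ : j ∈ Finset.univ) => hper j)
    have hL : ∑ j, ((c * u j) * Real.log (x j) - (c * u j) * Real.log (u j))
        = (∑ j, (c * u j) * Real.log (x j)) - ∑ j, (c * u j) * Real.log (u j) :=
      Finset.sum_sub_distrib _ _
    have hRs : ∑ j, (c * x j - c * u j) = c * (∑ j, x j) - c * c := by
      rw [Finset.sum_sub_distrib, ← Finset.mul_sum, ← Finset.mul_sum, hsumu]
    rw [decomp u hu, decomp x hx, hsumu]
    have h5 : (∑ j, (c * u j) * Real.log (x j)) - (∑ j, (c * u j) * Real.log (u j))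
        ≤ c * (∑ j, x j) - c * c := by
      rw [← hL, ← hRs]
      exact hsum2
    nlinarith [h5, sq_nonneg ((∑ j, x j) - c)]
  calc IdivR y (aconv m u) ≤ G u := stepA u hu
    _ ≤ G x := stepC
    _ = IdivR y (aconv m x) := stepB.symm

lemma continuous_ext (m : ℕ) (k : ℕ) :
    Continuous (fun w : Fin (m + 1) → ℝ => _root_.ext m w k) := by
  by_cases h : k < m + 1
  · simp only [_root_.ext, dif_pos h]; exact continuous_apply _
  · simp only [_root_.ext, dif_neg h]; exact continuous_const

lemma continuous_aconv (m : ℕ) (i : Fin (2 * m + 1)) :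
    Continuous (fun w : Fin (m + 1) → ℝ => aconv m w i) := by
  simp only [aconv]
  exact continuous_finset_sum _ fun k _ => (continuous_ext m _).mul (continuous_ext m _)

/-- the objective value is constant over the set of limit points
of the iterates. -/
theorem stmt17 (m : ℕ) (y : Fin (2 * m + 1) → ℝ) (hy : ∀ i, 0 < y i)
    (xs : ℕ → Fin (m + 1) → ℝ) (h0 : ∀ j, 0 < xs 0 j)
    (hstep : ∀ t, xs (t + 1) = Tmap m y (xs t))
    (xinf x' : Fin (m + 1) → ℝ)
    (hcinf : ∀ i, 0 < aconv m xinf i) (hc' : ∀ i, 0 < aconv m x' i)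
    (hliminf : ∃ φ : ℕ → ℕ, StrictMono φ ∧
      Filter.Tendsto (fun k => xs (φ k)) Filter.atTop (nhds xinf))
    (hlim' : ∃ ψ : ℕ → ℕ, StrictMono ψ ∧
      Filter.Tendsto (fun k => xs (ψ k)) Filter.atTop (nhds x')) :
    IdivR y (aconv m xinf) = IdivR y (aconv m x') := by
  obtain ⟨φ, hφ, hφt⟩ := hliminf
  obtain ⟨ψ, hψ, hψt⟩ := hlim'
  have hpos : ∀ t, ∀ j, 0 < xs t j := by
    intro t
    induction t with
    | zero => exact h0
    | succ n ih => rw [hstep n]; exact Tmap_pos m y hy (xs n) ih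
  have hanti : Antitone (fun t => IdivR y (aconv m (xs t))) := by
    apply antitone_nat_of_succ_le
    intro n
    show IdivR y (aconv m (xs (n + 1))) ≤ IdivR y (aconv m (xs n))
    rw [hstep n]
    exact descent m y hy (xs n) (hpos n)
  have hkey : ∀ (z : Fin (m + 1) → ℝ), (∀ i, 0 < aconv m z i) → ∀ (θ : ℕ → ℕ),
      Filter.Tendsto (fun k => xs (θ k)) Filter.atTop (nhds z) →
      Filter.Tendsto (fun k => IdivR y (aconv m (xs (θ k)))) Filter.atTop
        (nhds (IdivR y (aconv m z))) := by
    intro z hz θ hθ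
    have hac : ∀ i, Filter.Tendsto (fun k => aconv m (xs (θ k)) i) Filter.atTop
        (nhds (aconv m z i)) :=
      fun i => ((continuous_aconv m i).tendsto z).comp hθ
    simp only [IdivR]
    apply tendsto_finset_sum
    intro i _
    apply Filter.Tendsto.add
    · apply Filter.Tendsto.sub
      · apply Filter.Tendsto.const_mul
        apply Filter.Tendsto.log
        · exact tendsto_const_nhds.div (hac i) (hz i).ne'
        · exact (div_pos (hy i) (hz i)).ne'
      · exact tendsto_const_nhds
    · exact hac i
  have hT1 := hkey xinf hcinf φ hφt
  have hT2 := hkey x' hc' ψ hψt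
  have hle : ∀ (θ1 θ2 : ℕ → ℕ), StrictMono θ1 → StrictMono θ2 →
      ∀ L1 L2 : ℝ,
      Filter.Tendsto (fun k => IdivR y (aconv m (xs (θ1 k)))) Filter.atTop (nhds L1) →
      Filter.Tendsto (fun k => IdivR y (aconv m (xs (θ2 k)))) Filter.atTop (nhds L2) →
      L1 ≤ L2 := by
    intro θ1 θ2 h1 h2 L1 L2 hL1 hL2
    have hbound : ∀ k, L1 ≤ IdivR y (aconv m (xs (θ2 k))) := by
      intro k
      apply le_of_tendsto hL1
      filter_upwards [eventually_ge_atTop (θ2 k)] with n hn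
      exact hanti (le_trans hn (h1.id_le n))
    exact ge_of_tendsto hL2 (Filter.Eventually.of_forall hbound)
  exact le_antisymm (hle φ ψ hφ hψ _ _ hT1 hT2) (hle ψ φ hψ hφ _ _ hT2 hT1)
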